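/- In a finite semimodular lattice, the antichain cutsets are exactly the level sets of the rank function. -/

import Mathlib

/-- An antichain cutset: a set intersecting each maximal chain in exactly one element. -/
def IsAntichainCutset {α : Type*} [PartialOrder α] (A : Set α) : Prop :=
  ∀ c : Set α, IsMaxChain (· ≤ ·) c → ∃! x, x ∈ c ∧ x ∈ A

/-- A poset is strongly connected if any two maximal chains are connected by a finite
sequence of maximal chains in which consecutive chains have symmetric difference of
cardinality two. -/
def StronglyConnectedOrder (α : Type*) [PartialOrder α] : Prop :=
  ∀ c d : Set α, IsMaxChain (· ≤ ·) c → IsMaxChain (· ≤ ·) d →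
    ∃ (n : ℕ) (f : ℕ → Set α), f 0 = c ∧ f n = d ∧
      (∀ i ≤ n, IsMaxChain (· ≤ ·) (f i)) ∧
      ∀ i < n, (symmDiff (f i) (f (i + 1))).ncard = 2

set_option linter.unusedSectionVars false
set_option maxHeartbeats 1000000
namespace ACS
variable {α : Type*} [Lattice α] [Fintype α] [BoundedOrder α]

def SatCh : ℕ → α → α → Prop
  | 0, a, b => a = b
  | n+1, a, b => ∃ c : α, a ⋖ c ∧ SatCh n c b

lemma satch_le : ∀ {n : ℕ} {a b : α}, SatCh n a b → a ≤ b
  | 0, _, _, h => le_of_eq h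
  | _+1, _, _, ⟨_, hc, h⟩ => hc.le.trans (satch_le h)

lemma satch_snoc : ∀ {n : ℕ} {a b c : α}, SatCh n a b → b ⋖ c → SatCh (n+1) a c
  | 0, _, _, c, h, hbc => ⟨c, h ▸ hbc, rfl⟩
  | _+1, _, _, _, ⟨d, hd, h⟩, hbc => ⟨d, hd, satch_snoc h hbc⟩

lemma satch_concat : ∀ {m n : ℕ} {a b c : α}, SatCh m a b → SatCh n b c → SatCh (m+n) a c
  | 0, n, a, b, c, h, h2 => by rw [Nat.zero_add]; exact h ▸ h2
  | m+1, n, a, b, c, h, h2 => by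
      obtain ⟨d, hd, h⟩ := h
      rw [Nat.succ_add]
      exact ⟨d, hd, satch_concat h h2⟩

lemma Set.Finite.exists_maximal_wrt_port {ι β : Type*} [PartialOrder β] (f : ι → β)
    (s : Set ι) (h : s.Finite) (hs : s.Nonempty) :
    ∃ a ∈ s, ∀ a' ∈ s, f a ≤ f a' → f a = f a' := by
  obtain ⟨a, ha, hm⟩ := Set.Finite.exists_maximalFor f s h hs
  exact ⟨a, ha, fun a' ha' hle => le_antisymm hle (hm ha' hle)⟩

lemma exists_cov_le {a b : α} (h : a < b) : ∃ c, a ⋖ c ∧ c ≤ b := by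
  obtain ⟨c, ⟨hac, hcb⟩, hmin⟩ := Set.Finite.exists_maximal_wrt_port OrderDual.toDual
    {x : α | a < x ∧ x ≤ b} (Set.toFinite _) ⟨b, h, le_rfl⟩
  refine ⟨c, ⟨hac, fun u hau huc => ?_⟩, hcb⟩
  have : c = u := hmin u ⟨hau, huc.le.trans hcb⟩ (OrderDual.toDual_le_toDual.2 huc.le)
  exact absurd this (ne_of_gt huc)

lemma satch_exists_aux : ∀ N : ℕ, ∀ a b : α, (Set.Icc a b).ncard ≤ N → a ≤ b →
    ∃ n, SatCh n a b := by
  intro N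
  induction N with
  | zero =>
    intro a b hc hab
    have : a ∈ Set.Icc a b := ⟨le_rfl, hab⟩
    have := (Set.ncard_pos (Set.toFinite _)).2 ⟨a, this⟩
    omega
  | succ N ih =>
    intro a b hc hab
    rcases eq_or_lt_of_le hab with rfl | hab'
    · exact ⟨0, rfl⟩
    · obtain ⟨c, hac, hcb⟩ := exists_cov_le hab'
      have hsub : Set.Icc c b ⊂ Set.Icc a b := by
        constructor
        · exact fun x hx => ⟨hac.le.trans hx.1, hx.2⟩
        · intro hsup
          have := hsup ⟨le_rfl, hab'.le⟩
          exact absurd this.1 (hac.lt.not_ge)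
      have := Set.ncard_lt_ncard hsub (Set.toFinite _)
      obtain ⟨n, hn⟩ := ih c b (by omega) hcb
      exact ⟨n+1, c, hac, hn⟩

lemma satch_exists {a b : α} (hab : a ≤ b) : ∃ n, SatCh n a b :=
  satch_exists_aux (Set.Icc a b).ncard a b le_rfl hab

lemma satch_unique (hsm : ∀ x y : α, x ⊓ y ⋖ x → y ⋖ x ⊔ y) :
    ∀ m : ℕ, ∀ {n : ℕ} {a b : α}, SatCh m a b → SatCh n a b → m = n := by
  intro m
  induction m using Nat.strong_induction_on with
  | _ m ih =>
    intro n a b hm hn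
    match m, hm with
    | 0, hm =>
      subst hm
      match n, hn with
      | 0, _ => rfl
      | n+1, ⟨c, hc, hcb⟩ => exact absurd (satch_le hcb) (hc.lt.not_ge)
    | m+1, ⟨x1, hax, hx⟩ =>
      match n, hn with
      | 0, hn =>
        subst hn
        exact absurd (satch_le hx) (hax.lt.not_ge)
      | n+1, ⟨y1, hay, hy⟩ =>
        by_cases hxy : x1 = y1
        · subst hxy
          have := ih m (Nat.lt_succ_self m) hx hy
          omega
        · have hinf : x1 ⊓ y1 = a := by
            have h1 : a ≤ x1 ⊓ y1 := le_inf hax.le hay.le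
            rcases hax.eq_or_eq h1 inf_le_left with h | h
            · exact h
            · exfalso
              have hle : x1 ≤ y1 := h ▸ inf_le_right
              rcases hay.eq_or_eq (le_of_lt hax.lt) (hle) with h2 | h2
              · exact hax.lt.ne' h2
              · exact hxy h2
          have hyz : y1 ⋖ x1 ⊔ y1 := hsm x1 y1 (hinf ▸ hax)
          have hxz : x1 ⋖ x1 ⊔ y1 := by
            have := hsm y1 x1 (by rw [inf_comm, hinf]; exact hay)
            rwa [sup_comm] at this
          have hzb : x1 ⊔ y1 ≤ b := sup_le (satch_le hx) (satch_le hy)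
          obtain ⟨k, hk⟩ := satch_exists hzb
          have h1 : SatCh (k+1) x1 b := ⟨_, hxz, hk⟩
          have h2 : SatCh (k+1) y1 b := ⟨_, hyz, hk⟩
          have e1 : m = k+1 := ih m (Nat.lt_succ_self m) hx h1
          have e2 : (k+1 : ℕ) = n := by
            refine ih (k+1) ?_ h2 hy
            omega
          omega

/-- The rank of an element: the length of a saturated chain from `⊥`. -/
noncomputable def rk (x : α) : ℕ := (satch_exists (bot_le (a := x))).choose

lemma rk_spec (x : α) : SatCh (rk x) ⊥ x := (satch_exists bot_le).choose_spec

variable (hsm : ∀ x y : α, x ⊓ y ⋖ x → y ⋖ x ⊔ y)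
include hsm

lemma rk_bot : rk (⊥ : α) = 0 :=
  satch_unique hsm _ (rk_spec ⊥) (show SatCh 0 (⊥ : α) ⊥ from rfl)

lemma rk_cov {x y : α} (h : x ⋖ y) : rk y = rk x + 1 :=
  (satch_unique hsm _ (rk_spec y) (satch_snoc (rk_spec x) h)).symm ▸ rfl

lemma rk_cov' {x y : α} (h : x ⋖ y) : rk y = rk x + 1 :=
  satch_unique hsm _ (rk_spec y) (satch_snoc (rk_spec x) h)

lemma rk_lt {x y : α} (h : x < y) : rk x < rk y := by
  obtain ⟨n, hn⟩ := satch_exists h.le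
  have hcat : SatCh (rk x + n) ⊥ y := satch_concat (rk_spec x) hn
  have he : rk y = rk x + n := satch_unique hsm _ (rk_spec y) hcat
  match n, hn with
  | 0, hn => exact absurd hn h.ne
  | n+1, _ => omega

lemma rk_mono {x y : α} (h : x ≤ y) : rk x ≤ rk y := by
  rcases eq_or_lt_of_le h with rfl | h
  · exact le_rfl
  · exact (rk_lt hsm h).le

lemma rk_le_top (x : α) : rk x ≤ rk (⊤ : α) := rk_mono hsm le_top

lemma eq_of_rk_eq {x y : α} (hcomp : x ≤ y ∨ y ≤ x) (h : rk x = rk y) : x = y := by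
  rcases hcomp with hc | hc
  · rcases eq_or_lt_of_le hc with rfl | hlt
    · rfl
    · exact absurd h (rk_lt hsm hlt).ne
  · rcases eq_or_lt_of_le hc with rfl | hlt
    · rfl
    · exact absurd h.symm (rk_lt hsm hlt).ne

lemma rk_eq_zero {x : α} (h : rk x = 0) : x = ⊥ := by
  rcases eq_or_lt_of_le (bot_le (a := x)) with rfl | hlt
  · rfl
  · have := rk_lt hsm hlt
    rw [rk_bot hsm] at this
    omega

omit hsm

lemma maxchain_bot_mem {c : Set α} (hc : IsMaxChain (· ≤ ·) c) : ⊥ ∈ c := by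
  have hch : IsChain (· ≤ ·) (insert (⊥ : α) c) :=
    hc.1.insert fun b _ _ => Or.inl bot_le
  have := hc.2 hch (Set.subset_insert _ _)
  exact this ▸ Set.mem_insert _ _

lemma maxchain_top_mem {c : Set α} (hc : IsMaxChain (· ≤ ·) c) : ⊤ ∈ c := by
  have hch : IsChain (· ≤ ·) (insert (⊤ : α) c) :=
    hc.1.insert fun b _ _ => Or.inr le_top
  have := hc.2 hch (Set.subset_insert _ _)
  exact this ▸ Set.mem_insert _ _

lemma chain_exists_greatest {c S : Set α} (hc : IsChain (· ≤ ·) c) (hS : S ⊆ c)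
    (hne : S.Nonempty) : ∃ x ∈ S, ∀ s ∈ S, s ≤ x := by
  obtain ⟨x, hx, hmax⟩ := Set.Finite.exists_maximal_wrt_port id S (Set.toFinite _) hne
  refine ⟨x, hx, fun s hs => ?_⟩
  rcases eq_or_ne s x with rfl | hne2
  · exact le_rfl
  rcases hc (hS hs) (hS hx) hne2 with h | h
  · exact h
  · exact (hmax s hs h).ge

lemma chain_exists_least {c S : Set α} (hc : IsChain (· ≤ ·) c) (hS : S ⊆ c)
    (hne : S.Nonempty) : ∃ x ∈ S, ∀ s ∈ S, x ≤ s := by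
  obtain ⟨x, hx, hmax⟩ := Set.Finite.exists_maximal_wrt_port OrderDual.toDual S (Set.toFinite _) hne
  refine ⟨x, hx, fun s hs => ?_⟩
  rcases eq_or_ne s x with rfl | hne2
  · exact le_rfl
  rcases hc (hS hs) (hS hx) hne2 with h | h
  · exact (hmax s hs (OrderDual.toDual_le_toDual.2 h)).ge
  · exact h

lemma maxchain_succ {c : Set α} (hc : IsMaxChain (· ≤ ·) c) {x : α} (hx : x ∈ c)
    (hxt : x ≠ ⊤) : ∃ y ∈ c, x ⋖ y ∧ ∀ s ∈ c, x < s → y ≤ s := by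
  have hne : {s | s ∈ c ∧ x < s}.Nonempty :=
    ⟨⊤, maxchain_top_mem hc, lt_of_le_of_ne le_top hxt⟩
  obtain ⟨y, ⟨hyc, hxy⟩, hylb⟩ := chain_exists_least hc.1 (fun s hs => hs.1) hne
  refine ⟨y, hyc, ⟨hxy, fun u hxu huy => ?_⟩, fun s hs hxs => hylb s ⟨hs, hxs⟩⟩
  have huc : u ∉ c := fun h => absurd (hylb u ⟨h, hxu⟩) huy.not_ge
  have hch : IsChain (· ≤ ·) (insert u c) := by
    refine hc.1.insert fun b hb hub => ?_
    rcases eq_or_ne b x with rfl | hbx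
    · exact Or.inr hxu.le
    rcases hc.1 hb hx hbx with h | h
    · exact Or.inr (h.trans hxu.le)
    · have : x < b := lt_of_le_of_ne h (fun he => hbx he.symm)
      exact Or.inl (huy.le.trans (hylb b ⟨hb, this⟩))
  have := hc.2 hch (Set.subset_insert _ _)
  exact huc (this ▸ Set.mem_insert _ _)

include hsm

lemma maxchain_rk_inj {c : Set α} (hc : IsMaxChain (· ≤ ·) c) {x y : α} (hx : x ∈ c)
    (hy : y ∈ c) (h : rk x = rk y) : x = y := by
  rcases eq_or_ne x y with rfl | hne
  · rfl
  · exact eq_of_rk_eq hsm (hc.1 hx hy hne) h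

lemma maxchain_rk_surj {c : Set α} (hc : IsMaxChain (· ≤ ·) c) {k : ℕ}
    (hk : k ≤ rk (⊤ : α)) : ∃ x ∈ c, rk x = k := by
  have hne : {s | s ∈ c ∧ rk s ≤ k}.Nonempty :=
    ⟨⊥, maxchain_bot_mem hc, by rw [rk_bot hsm]; omega⟩
  obtain ⟨x, ⟨hxc, hxk⟩, hub⟩ := chain_exists_greatest hc.1 (fun s hs => hs.1) hne
  rcases eq_or_lt_of_le hxk with h | h
  · exact ⟨x, hxc, h⟩
  · exfalso
    have hxt : x ≠ ⊤ := by
      rintro rfl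
      omega
    obtain ⟨y, hyc, hcov, -⟩ := maxchain_succ hc hxc hxt
    have hry : rk y = rk x + 1 := rk_cov hsm hcov
    have : y ≤ x := hub y ⟨hyc, by omega⟩
    exact absurd this hcov.lt.not_ge

lemma maxchain_cov {c : Set α} (hc : IsMaxChain (· ≤ ·) c) {w x : α} (hw : w ∈ c)
    (hx : x ∈ c) (h : rk x = rk w + 1) : w ⋖ x := by
  have hwt : w ≠ ⊤ := by
    rintro rfl
    have := rk_le_top hsm x
    omega
  obtain ⟨y, hyc, hcov, -⟩ := maxchain_succ hc hw hwt
  have hry : rk y = rk w + 1 := rk_cov hsm hcov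
  have : y = x := maxchain_rk_inj hsm hc hyc hx (by omega)
  exact this ▸ hcov

omit hsm

lemma maxchain_of_succ {c : Set α} (hch : IsChain (· ≤ ·) c) (hbot : ⊥ ∈ c)
    (hsucc : ∀ x ∈ c, x ≠ ⊤ → ∃ y ∈ c, x ⋖ y) : IsMaxChain (· ≤ ·) c := by
  refine ⟨hch, fun t ht hct => ?_⟩
  by_contra hne
  have hns : ¬ t ⊆ c := fun h => hne (Set.Subset.antisymm hct h)
  obtain ⟨z, hzt, hzc⟩ := Set.not_subset.1 hns
  have hne2 : {s | s ∈ c ∧ s ≤ z}.Nonempty := ⟨⊥, hbot, bot_le⟩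
  obtain ⟨x, ⟨hxc, hxz⟩, hub⟩ := chain_exists_greatest hch (fun s hs => hs.1) hne2
  have hxz' : x < z := lt_of_le_of_ne hxz (fun h => hzc (h ▸ hxc))
  have hxt : x ≠ ⊤ := by
    rintro rfl
    exact not_top_lt hxz'
  obtain ⟨y, hyc, hcov⟩ := hsucc x hxc hxt
  have hcomp : y ≤ z ∨ z ≤ y := ht (hct hyc) hzt (fun h => hzc (h ▸ hyc))
  rcases hcomp with h | h
  · exact absurd (hub y ⟨hyc, h⟩) hcov.lt.not_ge
  · exact hcov.2 hxz' (lt_of_le_of_ne h (fun he => hzc (he ▸ hyc)))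

/-- The chain obtained by exchanging: bottom of `c` up to `w`, then `x`, then top of `e`
from `z` on, where `w ⋖ x ⋖ z`. -/
lemma exchange_maxchain {c e : Set α} (hc : IsMaxChain (· ≤ ·) c)
    (he : IsMaxChain (· ≤ ·) e) {w x z : α} (hwc : w ∈ c) (hze : z ∈ e)
    (hwx : w ⋖ x) (hxz : x ⋖ z) :
    IsMaxChain (· ≤ ·) (insert x ((c ∩ Set.Iic w) ∪ (e ∩ Set.Ici z))) := by
  have hord1 : ∀ a ∈ c ∩ Set.Iic w, a ≤ x := fun a ha => ha.2.trans hwx.le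
  have hord2 : ∀ b ∈ e ∩ Set.Ici z, x ≤ b := fun b hb => hxz.le.trans hb.2
  have hchain : IsChain (· ≤ ·) (insert x ((c ∩ Set.Iic w) ∪ (e ∩ Set.Ici z))) := by
    intro a ha b hb hab
    rcases ha with rfl | ha
    · rcases hb with rfl | hb
      · exact absurd rfl hab
      rcases hb with hb | hb
      · exact Or.inr (hord1 b hb)
      · exact Or.inl (hord2 b hb)
    rcases hb with rfl | hb
    · rcases ha with ha | ha
      · exact Or.inl (hord1 a ha)
      · exact Or.inr (hord2 a ha)
    rcases ha with ha | ha <;> rcases hb with hb | hb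
    · exact hc.1 ha.1 hb.1 hab
    · exact Or.inl ((hord1 a ha).trans (hord2 b hb))
    · exact Or.inr ((hord1 b hb).trans (hord2 a ha))
    · exact he.1 ha.1 hb.1 hab
  refine maxchain_of_succ hchain (Or.inr (Or.inl ⟨maxchain_bot_mem hc, bot_le⟩)) ?_
  intro u hu hut
  rcases hu with rfl | hu
  · exact ⟨z, Or.inr (Or.inr ⟨hze, le_rfl⟩), hxz⟩
  rcases hu with hu | hu
  · rcases eq_or_lt_of_le hu.2 with h | h
    · exact ⟨x, Set.mem_insert _ _, h ▸ hwx⟩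
    · obtain ⟨y, hyc, hcov, hmin⟩ := maxchain_succ hc hu.1 hut
      exact ⟨y, Or.inr (Or.inl ⟨hyc, hmin w hwc h⟩), hcov⟩
  · obtain ⟨y, hye, hcov, -⟩ := maxchain_succ he hu.1 hut
    exact ⟨y, Or.inr (Or.inr ⟨hye, hu.2.trans hcov.le⟩), hcov⟩

/-- Two chains agree up to rank `j`. -/
def Agree (c d : Set α) (j : ℕ) : Prop :=
  ∀ k ≤ j, ∀ x ∈ c, ∀ y ∈ d, rk x = k → rk y = k → x = y

lemma agree_mono {c d : Set α} {j j' : ℕ} (h : j' ≤ j) (ha : Agree c d j) :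
    Agree c d j' := fun k hk => ha k (hk.trans h)

lemma agree_symm {c d : Set α} {j : ℕ} (ha : Agree c d j) : Agree d c j :=
  fun k hk x hx y hy hxk hyk => (ha k hk y hy x hx hyk hxk).symm

include hsm

lemma agree_top_eq {c d : Set α} (hc : IsMaxChain (· ≤ ·) c) (hd : IsMaxChain (· ≤ ·) d)
    (ha : Agree c d (rk (⊤ : α))) : c = d := by
  ext v
  constructor
  · intro hv
    obtain ⟨y, hyd, hyk⟩ := maxchain_rk_surj hsm hd (rk_le_top hsm v)
    exact (ha (rk v) (rk_le_top hsm v) v hv y hyd rfl hyk) ▸ hyd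
  · intro hv
    obtain ⟨y, hyc, hyk⟩ := maxchain_rk_surj hsm hc (rk_le_top hsm v)
    exact (agree_symm ha (rk v) (rk_le_top hsm v) v hv y hyc rfl hyk) ▸ hyc

lemma key (A : Set α) (hA : IsAntichainCutset A) :
    ∀ t : ℕ, ∀ c d : Set α, IsMaxChain (· ≤ ·) c → IsMaxChain (· ≤ ·) d →
      Agree c d (rk (⊤ : α) - t) →
      ∀ u v : α, u ∈ c → u ∈ A → v ∈ d → v ∈ A → rk u = rk v := by
  intro t
  induction t with
  | zero =>
    intro c d hc hd hagree u v huc huA hvd hvA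
    have hcd : c = d := agree_top_eq hsm hc hd (by simpa using hagree)
    subst hcd
    obtain ⟨p, -, hup⟩ := hA c hc
    rw [hup u ⟨huc, huA⟩, hup v ⟨hvd, hvA⟩]
  | succ t ih =>
    intro c d hc hd hagree u v huc huA hvd hvA
    set N := rk (⊤ : α) with hN
    set j := N - (t+1) with hj
    by_cases hjN : j + 1 ≤ N
    case neg =>
      have hN0 : N = 0 := by omega
      have hag : Agree c d N := agree_mono (by omega) hagree
      have hcd := agree_top_eq hsm hc hd hag
      subst hcd
      obtain ⟨p, -, hup⟩ := hA c hc
      rw [hup u ⟨huc, huA⟩, hup v ⟨hvd, hvA⟩]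
    case pos =>
      obtain ⟨w, hwc, hwj⟩ := maxchain_rk_surj hsm hc (show j ≤ N by omega)
      obtain ⟨w', hwd, hwj'⟩ := maxchain_rk_surj hsm hd (show j ≤ N by omega)
      have hww : w = w' := hagree j le_rfl w hwc w' hwd hwj hwj'
      subst hww
      obtain ⟨x, hxc, hxj⟩ := maxchain_rk_surj hsm hc hjN
      obtain ⟨y, hyd, hyj⟩ := maxchain_rk_surj hsm hd hjN
      by_cases hxy : x = y
      · have hag1 : Agree c d (j+1) := by
          intro k hk x' hx' y' hy' hx'k hy'k
          rcases Nat.lt_or_ge k (j+1) with h | h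
          · exact hagree k (by omega) x' hx' y' hy' hx'k hy'k
          · have e1 : x' = x := maxchain_rk_inj hsm hc hx' hxc (by omega)
            have e2 : y' = y := maxchain_rk_inj hsm hd hy' hyd (by omega)
            rw [e1, e2, hxy]
        exact ih c d hc hd (agree_mono (by omega) hag1) u v huc huA hvd hvA
      · have hwx : w ⋖ x := maxchain_cov hsm hc hwc hxc (by omega)
        have hwy : w ⋖ y := maxchain_cov hsm hd hwd hyd (by omega)
        have hinf : x ⊓ y = w := by
          have h1 : w ≤ x ⊓ y := le_inf hwx.le hwy.le
          rcases hwx.eq_or_eq h1 inf_le_left with h | h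
          · exact h
          · exfalso
            have hle : x ≤ y := h ▸ inf_le_right
            exact hxy (eq_of_rk_eq hsm (Or.inl hle) (by omega))
        have hyz : y ⋖ x ⊔ y := hsm x y (hinf ▸ hwx)
        have hxz : x ⋖ x ⊔ y := by
          have := hsm y x (by rw [inf_comm, hinf]; exact hwy)
          rwa [sup_comm] at this
        obtain ⟨e, he, hze⟩ := (IsChain.singleton (a := x ⊔ y)).exists_maxChain
        have hzemem : x ⊔ y ∈ e := hze rfl
        have hrkz : rk (x ⊔ y) = j + 2 := by
          have := rk_cov hsm hxz
          omega
        set s : Set α := (c ∩ Set.Iic w) ∪ (e ∩ Set.Ici (x ⊔ y)) with hsdef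
        have hcs : IsMaxChain (· ≤ ·) (insert x s) :=
          exchange_maxchain hc he hwc hzemem hwx hxz
        have hIic : d ∩ Set.Iic w = c ∩ Set.Iic w := by
          ext a
          constructor
          · rintro ⟨had, haw⟩
            have hak : rk a ≤ j := by have := rk_mono hsm haw; omega
            obtain ⟨a', ha'c, ha'k⟩ := maxchain_rk_surj hsm hc (show rk a ≤ N by omega)
            have hh := hagree (rk a) (by omega) a' ha'c a had ha'k rfl
            exact ⟨hh ▸ ha'c, haw⟩
          · rintro ⟨hac, haw⟩
            have hak : rk a ≤ j := by have := rk_mono hsm haw; omega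
            obtain ⟨a', ha'd, ha'k⟩ := maxchain_rk_surj hsm hd (show rk a ≤ N by omega)
            have hh := hagree (rk a) (by omega) a hac a' ha'd rfl ha'k
            exact ⟨hh.symm ▸ ha'd, haw⟩
        have hds : IsMaxChain (· ≤ ·) (insert y ((d ∩ Set.Iic w) ∪ (e ∩ Set.Ici (x ⊔ y)))) :=
          exchange_maxchain hd he hwd hzemem hwy hyz
        rw [hIic] at hds
        obtain ⟨p, ⟨hpc, hpA⟩, hpu⟩ := hA (insert x s) hcs
        obtain ⟨q, ⟨hqd, hqA⟩, hqu⟩ := hA (insert y s) hds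
        have hxs : x ∉ s := by
          rintro (⟨-, hxw⟩ | ⟨-, hxz'⟩)
          · have := rk_mono hsm hxw; omega
          · have := rk_mono hsm hxz'; omega
        have hpq : rk p = rk q := by
          rcases hpc with rfl | hps
          · rcases hqd with rfl | hqs
            · omega
            · exfalso
              have hh := hpu q ⟨Or.inr hqs, hqA⟩
              exact hxs (hh ▸ hqs)
          · have hh := hqu p ⟨Or.inr hps, hpA⟩
            rw [hh]
        have hagc : Agree c (insert x s) (j+1) := by
          intro k hk x' hx' y' hy' hx'k hy'k
          rcases hy' with rfl | hy'
          · exact maxchain_rk_inj hsm hc hx' hxc (by omega)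
          rcases hy' with ⟨hy'c, -⟩ | ⟨-, hy'z⟩
          · exact maxchain_rk_inj hsm hc hx' hy'c (by omega)
          · exfalso
            have := rk_mono hsm hy'z
            omega
        have hagd : Agree d (insert y s) (j+1) := by
          intro k hk x' hx' y' hy' hx'k hy'k
          rcases hy' with rfl | hy'
          · exact maxchain_rk_inj hsm hd hx' hyd (by omega)
          rcases hy' with ⟨hy'c, hy'w⟩ | ⟨-, hy'z⟩
          · have hmem : y' ∈ d ∩ Set.Iic w := by rw [hIic]; exact ⟨hy'c, hy'w⟩
            exact maxchain_rk_inj hsm hd hx' hmem.1 (by omega)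
          · exfalso
            have := rk_mono hsm hy'z
            omega
        have e1 : rk u = rk p :=
          ih c (insert x s) hc hcs (agree_mono (by omega) hagc) u p huc huA hpc hpA
        have e2 : rk v = rk q :=
          ih d (insert y s) hd hds (agree_mono (by omega) hagd) v q hvd hvA hqd hqA
        omega

end ACS

/-- In a finite semimodular lattice, the antichain cutsets are exactly the level sets
of the rank function. -/
theorem antichain_cutsets_semimodular {α : Type*} [Lattice α] [Fintype α]
    [BoundedOrder α] (hsm : ∀ x y : α, x ⊓ y ⋖ x → y ⋖ x ⊔ y) :
    ∃ r : α → ℕ, r ⊥ = 0 ∧ (∀ x y : α, x ⋖ y → r y = r x + 1) ∧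
      ∀ A : Set α, IsAntichainCutset A ↔ ∃ k : ℕ, A = {x | r x = k} ∧ A.Nonempty := by
  refine ⟨ACS.rk, ACS.rk_bot hsm, fun x y h => ACS.rk_cov hsm h, fun A => ⟨?_, ?_⟩⟩
  · intro hA
    obtain ⟨c₀, hc₀, -⟩ := (IsChain.singleton (a := (⊥ : α))).exists_maxChain
    obtain ⟨p₀, ⟨hp₀c, hp₀A⟩, -⟩ := hA c₀ hc₀
    have hag : ∀ c : Set α, ACS.Agree c c₀ (ACS.rk (⊤ : α) - ACS.rk (⊤ : α)) := by
      intro c k hk x hx y hy hxk hyk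
      rw [ACS.rk_eq_zero hsm (show ACS.rk x = 0 by omega),
        ACS.rk_eq_zero hsm (show ACS.rk y = 0 by omega)]
    refine ⟨ACS.rk p₀, ?_, ⟨p₀, hp₀A⟩⟩
    ext a
    simp only [Set.mem_setOf_eq]
    constructor
    · intro haA
      obtain ⟨c, hc, hac⟩ := (IsChain.singleton (a := a)).exists_maxChain
      exact ACS.key hsm A hA (ACS.rk ⊤) c c₀ hc hc₀ (hag c) a p₀ (hac rfl) haA hp₀c hp₀A
    · intro hra
      obtain ⟨c, hc, hac⟩ := (IsChain.singleton (a := a)).exists_maxChain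
      obtain ⟨p, ⟨hpc, hpA⟩, -⟩ := hA c hc
      have h1 : ACS.rk p = ACS.rk p₀ :=
        ACS.key hsm A hA (ACS.rk ⊤) c c₀ hc hc₀ (hag c) p p₀ hpc hpA hp₀c hp₀A
      have h2 : p = a := ACS.maxchain_rk_inj hsm hc hpc (hac rfl) (by omega)
      exact h2 ▸ hpA
  · rintro ⟨k, rfl, hne⟩ c hc
    obtain ⟨a, ha⟩ := hne
    have hak : ACS.rk a = k := ha
    have hk : k ≤ ACS.rk (⊤ : α) := hak ▸ ACS.rk_le_top hsm a
    obtain ⟨x, hxc, hxk⟩ := ACS.maxchain_rk_surj hsm hc hk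
    refine ⟨x, ⟨hxc, hxk⟩, ?_⟩
    rintro y ⟨hyc, hyk⟩
    exact ACS.maxchain_rk_inj hsm hc hyc hxc (by rw [hyk, hxk])
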